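/- Let G be a finite simple graph with n vertices, degree sequence d_1,…,d_n, and t_G triangles, and let α be a real number. Then tr(A_α(G)³) = α³·Σ_{i=1}^n d_i³ + 3α(1−α)²·Σ_{i=1}^n d_i² + 6(1−α)³·t_G. -/

import Mathlib

open Matrix BigOperators

private lemma fiber_card_aux {V : Type*} [Fintype V] [DecidableEq V]
    (G : SimpleGraph V) [DecidableRel G.Adj] (s : Finset V) (hs : s ∈ G.cliqueFinset 3) :
    ((Finset.univ.filter
      (fun p : V × V × V => G.Adj p.1 p.2.1 ∧ G.Adj p.2.1 p.2.2 ∧ G.Adj p.2.2 p.1)).filter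
      (fun p => ({p.1, p.2.1, p.2.2} : Finset V) = s)).card = 6 := by
  rw [SimpleGraph.mem_cliqueFinset_iff] at hs
  obtain ⟨a, b, c, hab, hac, hbc, rfl⟩ := Finset.card_eq_three.mp hs.card_eq
  obtain ⟨hAB, hAC, hBC⟩ := SimpleGraph.is3Clique_triple_iff.mp hs
  have key : ((Finset.univ.filter
      (fun p : V × V × V => G.Adj p.1 p.2.1 ∧ G.Adj p.2.1 p.2.2 ∧ G.Adj p.2.2 p.1)).filter
      (fun p => ({p.1, p.2.1, p.2.2} : Finset V) = {a, b, c}))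
      = {(a,b,c),(a,c,b),(b,a,c),(b,c,a),(c,a,b),(c,b,a)} := by
    ext ⟨x, y, z⟩
    simp only [Finset.mem_filter, Finset.mem_univ, true_and, Finset.mem_insert,
      Finset.mem_singleton, Prod.mk.injEq]
    constructor
    · rintro ⟨⟨hxy, hyz, hzx⟩, hset⟩
      have hx : x = a ∨ x = b ∨ x = c := by
        have := hset ▸ (Finset.mem_insert_self x {y, z}); simpa using this
      have hy : y = a ∨ y = b ∨ y = c := by
        have : y ∈ ({a,b,c} : Finset V) := hset ▸ (by simp); simpa using this
      have hz : z = a ∨ z = b ∨ z = c := by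
        have : z ∈ ({a,b,c} : Finset V) := hset ▸ (by simp); simpa using this
      have h1 := hxy.ne; have h2 := hyz.ne; have h3 := hzx.ne
      have hcab : c ∈ ({x,y,z} : Finset V) := hset ▸ (by simp)
      have hbab : b ∈ ({x,y,z} : Finset V) := hset ▸ (by simp)
      have haab : a ∈ ({x,y,z} : Finset V) := hset ▸ (by simp)
      simp only [Finset.mem_insert, Finset.mem_singleton] at hcab hbab haab
      rcases hx with rfl|rfl|rfl <;> rcases hy with rfl|rfl|rfl <;>
        rcases hz with rfl|rfl|rfl <;> simp_all
    · rintro (⟨rfl,rfl,rfl⟩|⟨rfl,rfl,rfl⟩|⟨rfl,rfl,rfl⟩|⟨rfl,rfl,rfl⟩|⟨rfl,rfl,rfl⟩|⟨rfl,rfl,rfl⟩) <;>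
        refine ⟨⟨?_, ?_, ?_⟩, ?_⟩ <;>
        first
          | assumption
          | exact G.symm ‹_›
          | (apply G.adj_symm; assumption)
          | (ext w; simp; try tauto)
  rw [key]
  simp [Finset.card_insert_of_notMem, Prod.ext_iff, hab, hac, hbc, hab.symm, hac.symm, hbc.symm]

private lemma six_mul_triangles_aux {V : Type*} [Fintype V] [DecidableEq V]
    (G : SimpleGraph V) [DecidableRel G.Adj] :
    ((Finset.univ : Finset (V × V × V)).filter
      (fun p => G.Adj p.1 p.2.1 ∧ G.Adj p.2.1 p.2.2 ∧ G.Adj p.2.2 p.1)).card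
    = 6 * (G.cliqueFinset 3).card := by
  rw [Finset.card_eq_sum_card_fiberwise
    (f := fun p : V × V × V => ({p.1, p.2.1, p.2.2} : Finset V)) (t := G.cliqueFinset 3)]
  · rw [Finset.sum_congr rfl (fun s hs => fiber_card_aux G s hs), Finset.sum_const,
      smul_eq_mul, mul_comm]
  · rintro ⟨x, y, z⟩ hp
    simp only [Finset.mem_coe, Finset.mem_filter] at hp
    obtain ⟨-, hxy, hyz, hzx⟩ := hp
    rw [Finset.mem_coe, SimpleGraph.mem_cliqueFinset_iff]
    exact SimpleGraph.is3Clique_triple_iff.2 ⟨hxy, hzx.symm, hyz⟩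

private lemma trace_adj_cube_aux {V : Type*} [Fintype V] [DecidableEq V]
    (G : SimpleGraph V) [DecidableRel G.Adj] :
    Matrix.trace (G.adjMatrix ℝ * G.adjMatrix ℝ * G.adjMatrix ℝ)
      = 6 * ((G.cliqueFinset 3).card : ℝ) := by
  have h : Matrix.trace (G.adjMatrix ℝ * G.adjMatrix ℝ * G.adjMatrix ℝ)
      = ((Finset.univ.filter
        (fun p : V × V × V =>
          G.Adj p.1 p.2.1 ∧ G.Adj p.2.1 p.2.2 ∧ G.Adj p.2.2 p.1)).card : ℝ) := by
    rw [Finset.card_filter]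
    push_cast
    rw [Fintype.sum_prod_type]
    simp only [Fintype.sum_prod_type]
    simp only [Matrix.trace, Matrix.diag, Matrix.mul_apply, SimpleGraph.adjMatrix_apply,
      Finset.sum_mul]
    rw [Finset.sum_comm]
    refine Finset.sum_congr rfl fun x _ => Finset.sum_congr rfl fun y _ =>
      Finset.sum_congr rfl fun z _ => ?_
    split_ifs <;> simp_all
  rw [h, six_mul_triangles_aux]
  push_cast
  ring

/-- For a finite simple graph `G` with degree sequence `(d_v)` and `t_G`
triangles, and a real number `α`, the matrix `A_α(G) = α·D(G) + (1−α)·A(G)` satisfies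
`tr(A_α(G)³) = α³·Σ d³ + 3α(1−α)²·Σ d² + 6(1−α)³·t_G`. -/
theorem trace_Aalpha_cube {V : Type*} [Fintype V] [DecidableEq V]
    (G : SimpleGraph V) [DecidableRel G.Adj] (α : ℝ) :
    Matrix.trace
        ((α • Matrix.diagonal (fun v => (G.degree v : ℝ)) + (1 - α) • G.adjMatrix ℝ) ^ 3)
      = α ^ 3 * ∑ v, (G.degree v : ℝ) ^ 3
        + 3 * α * (1 - α) ^ 2 * ∑ v, (G.degree v : ℝ) ^ 2
        + 6 * (1 - α) ^ 3 * ((G.cliqueFinset 3).card : ℝ) := by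
  have h6 := trace_adj_cube_aux G
  set D : Matrix V V ℝ := Matrix.diagonal (fun v => (G.degree v : ℝ)) with hD
  set A : Matrix V V ℝ := G.adjMatrix ℝ with hA
  have expand : (α • D + (1 - α) • A) ^ 3
      = (α*α*α) • (D*D*D)
        + (α*α*(1-α)) • (D*D*A + D*A*D + A*D*D)
        + (α*(1-α)*(1-α)) • (D*A*A + A*D*A + A*A*D)
        + ((1-α)*(1-α)*(1-α)) • (A*A*A) := by
    rw [pow_succ, pow_two]
    simp only [add_mul, mul_add, smul_mul_assoc, mul_smul_comm, smul_add, smul_smul]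
    abel_nf
    ring_nf
    abel
  have hDDD : Matrix.trace (D*D*D) = ∑ v, (G.degree v : ℝ) ^ 3 := by
    simp [hD, Matrix.diagonal_mul_diagonal, Matrix.trace_diagonal]; ring_nf
  have hdiagA : ∀ v, A v v = 0 := fun v => by simp [hA]
  have hDDA : Matrix.trace (D*D*A) = 0 := by
    rw [hD, Matrix.diagonal_mul_diagonal]
    simp [Matrix.trace, Matrix.diag, Matrix.diagonal_mul, hdiagA]
  have hDAD : Matrix.trace (D*A*D) = 0 := by
    rw [Matrix.trace_mul_comm, ← mul_assoc]; exact hDDA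
  have hADD : Matrix.trace (A*D*D) = 0 := by
    rw [mul_assoc, Matrix.trace_mul_comm]; exact hDDA
  have hDAA : Matrix.trace (D*A*A) = ∑ v, (G.degree v : ℝ) ^ 2 := by
    rw [mul_assoc]
    simp [hD, hA, Matrix.trace, Matrix.diag, Matrix.diagonal_mul,
      G.adjMatrix_mul_self_apply_self, sq]
  have hADA : Matrix.trace (A*D*A) = ∑ v, (G.degree v : ℝ) ^ 2 := by
    rw [mul_assoc, Matrix.trace_mul_comm]; exact hDAA
  have hAAD : Matrix.trace (A*A*D) = ∑ v, (G.degree v : ℝ) ^ 2 := by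
    rw [Matrix.trace_mul_comm, ← mul_assoc]; exact hDAA
  rw [expand]
  simp only [Matrix.trace_add, Matrix.trace_smul, smul_eq_mul, hDDD, hDDA, hDAD, hADD,
    hDAA, hADA, hAAD, h6]
  ring
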